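/- Let 1 < α ≤ 2, 0 ≤ β ≤ α - 1, a < b. For fixed s ∈ [a,b], the function t ↦ (t-a)^(α-1)(b-s)^(α-1-β)/(b-a)^(α-1-β) - (t-s)^(α-1) is monotonically decreasing on [s,b]. -/

import Mathlib

theorem stmt_2 (α β a b s : ℝ) (hα : 1 < α) (hα2 : α ≤ 2) (hβ : 0 ≤ β)
    (hβα : β ≤ α - 1) (hab : a < b) (hs : s ∈ Set.Icc a b) :
    AntitoneOn (fun t : ℝ =>
      (t - a) ^ (α - 1) * (b - s) ^ (α - 1 - β) / (b - a) ^ (α - 1 - β) -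
        (t - s) ^ (α - 1)) (Set.Icc s b) := by
  obtain ⟨hsa, hsb⟩ := hs
  have hγ : (0:ℝ) < α - 1 := by linarith
  have hγ1 : α - 1 - 1 ≤ 0 := by linarith
  have hδ : (0:ℝ) ≤ α - 1 - β := by linarith
  have hba : (0:ℝ) < b - a := by linarith
  have hKD : (b - s) ^ (α - 1 - β) / (b - a) ^ (α - 1 - β) ≤ 1 := by
    rw [div_le_one (Real.rpow_pos_of_pos hba _)]
    exact Real.rpow_le_rpow (by linarith) (by linarith) hδ
  have hK0 : (0:ℝ) ≤ (b - s) ^ (α - 1 - β) := Real.rpow_nonneg (by linarith) _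
  have hD0 : (0:ℝ) < (b - a) ^ (α - 1 - β) := Real.rpow_pos_of_pos hba _
  apply antitoneOn_of_deriv_nonpos (convex_Icc s b)
  · apply ContinuousOn.sub
    · apply ContinuousOn.div_const
      apply ContinuousOn.mul _ continuousOn_const
      exact ((Real.continuous_rpow_const hγ.le).comp
        (continuous_id.sub continuous_const)).continuousOn
    · exact ((Real.continuous_rpow_const hγ.le).comp
        (continuous_id.sub continuous_const)).continuousOn
  · intro t ht
    rw [interior_Icc] at ht
    have h1 : t - a ≠ 0 := by have := ht.1; intro h; nlinarith
    have h2 : t - s ≠ 0 := by have := ht.1; intro h; linarith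
    have d1 : HasDerivAt (fun t : ℝ => (t - a) ^ (α - 1))
        ((α - 1) * (t - a) ^ (α - 1 - 1) * 1) t :=
      (Real.hasDerivAt_rpow_const (p := α - 1) (Or.inl h1)).comp (h := fun x : ℝ => x - a) t ((hasDerivAt_id t).sub_const a)
    have d2 : HasDerivAt (fun t : ℝ => (t - s) ^ (α - 1))
        ((α - 1) * (t - s) ^ (α - 1 - 1) * 1) t :=
      (Real.hasDerivAt_rpow_const (p := α - 1) (Or.inl h2)).comp (h := fun x : ℝ => x - s) t ((hasDerivAt_id t).sub_const s)
    exact (((d1.mul_const _).div_const _).sub d2).differentiableAt.differentiableWithinAt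
  · intro t ht
    rw [interior_Icc] at ht
    have hts : 0 < t - s := by linarith [ht.1]
    have h1 : t - a ≠ 0 := by intro h; nlinarith [ht.1]
    have d1 : HasDerivAt (fun t : ℝ => (t - a) ^ (α - 1))
        ((α - 1) * (t - a) ^ (α - 1 - 1) * 1) t :=
      (Real.hasDerivAt_rpow_const (p := α - 1) (Or.inl h1)).comp (h := fun x : ℝ => x - a) t ((hasDerivAt_id t).sub_const a)
    have d2 : HasDerivAt (fun t : ℝ => (t - s) ^ (α - 1))
        ((α - 1) * (t - s) ^ (α - 1 - 1) * 1) t :=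
      (Real.hasDerivAt_rpow_const (p := α - 1) (Or.inl hts.ne')).comp (h := fun x : ℝ => x - s) t ((hasDerivAt_id t).sub_const s)
    rw [show deriv (fun t : ℝ => (t - a) ^ (α - 1) * (b - s) ^ (α - 1 - β) / (b - a) ^ (α - 1 - β) -
        (t - s) ^ (α - 1)) t = _ from
      (((d1.mul_const ((b - s) ^ (α - 1 - β))).div_const _).sub d2).deriv]
    have key : (t - a) ^ (α - 1 - 1) ≤ (t - s) ^ (α - 1 - 1) :=
      Real.rpow_le_rpow_of_nonpos hts (by linarith [ht.1, hsa]) hγ1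
    have ha0 : (0:ℝ) ≤ (t - a) ^ (α - 1 - 1) := Real.rpow_nonneg (by nlinarith [ht.1]) _
    have step : (t - a) ^ (α - 1 - 1) * ((b - s) ^ (α - 1 - β) / (b - a) ^ (α - 1 - β))
        ≤ (t - s) ^ (α - 1 - 1) * 1 :=
      mul_le_mul key hKD (div_nonneg hK0 hD0.le) (Real.rpow_nonneg hts.le _)
    rw [mul_one] at step
    have : (α - 1) * (t - a) ^ (α - 1 - 1) * 1 * (b - s) ^ (α - 1 - β) / (b - a) ^ (α - 1 - β)
        = (α - 1) * ((t - a) ^ (α - 1 - 1) * ((b - s) ^ (α - 1 - β) / (b - a) ^ (α - 1 - β))) := by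
      ring
    rw [this]
    nlinarith [mul_le_mul_of_nonneg_left step hγ.le]
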